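/- If (α, β) is a connected component of [0,g] \ E, then for every t with α < t ≤ β one has B(t) = B(β). -/

import Mathlib

noncomputable def gauss (x : ℝ) : ℝ := Int.fract x⁻¹

def B (t : ℝ) : Set ℝ := {x ∈ Set.Icc (0:ℝ) 1 | ∀ k : ℕ, t ≤ gauss^[k] x}

def E : Set ℝ := {x ∈ Set.Icc (0:ℝ) 1 | ∀ k : ℕ, x ≤ gauss^[k] x}

open Filter Topology Set

lemma gauss_lt_one (x : ℝ) : gauss x < 1 := Int.fract_lt_one _

lemma gauss_eq (k : ℤ) {z : ℝ} (h1 : (k:ℝ) ≤ z⁻¹) (h2 : z⁻¹ < (k:ℝ)+1) :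
    gauss z = z⁻¹ - k := by
  have : ⌊z⁻¹⌋ = k := Int.floor_eq_iff.mpr ⟨h1, by push_cast; exact h2⟩
  simp [gauss, Int.fract, this]

/-- The Gauss map is left-continuous, with left limits attained strictly from above. -/
lemma tendsto_gauss_left {p : ℝ} (hp0 : 0 < p) (hp1 : p ≤ 1) :
    Tendsto gauss (𝓝[<] p) (𝓝[>] (gauss p)) := by
  set c : ℝ := p⁻¹ with hcdef
  set k : ℤ := ⌊c⌋ with hkdef
  have hc0 : 0 < c := inv_pos.mpr hp0
  have hc1 : 1 ≤ c := one_le_inv_iff₀.mpr ⟨hp0, hp1⟩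
  have hkc : (k:ℝ) ≤ c := Int.floor_le c
  have hck : c < (k:ℝ) + 1 := Int.lt_floor_add_one c
  have hk1 : (1:ℝ) ≤ (k:ℝ) := by exact_mod_cast Int.le_floor.mpr (by exact_mod_cast hc1)
  have hk0 : (0:ℝ) < (k:ℝ) + 1 := by linarith
  have hlb : 1/((k:ℝ)+1) < p := by
    rw [show p = 1/c by rw [one_div, hcdef, inv_inv]]
    exact one_div_lt_one_div_of_lt hc0 hck
  have hSmem : Ioo (1/((k:ℝ)+1)) p ∈ 𝓝[<] p := Ioo_mem_nhdsLT hlb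
  have hgp : gauss p = c - k := gauss_eq k hkc hck
  have hval : ∀ z ∈ Ioo (1/((k:ℝ)+1)) p, gauss z = z⁻¹ - k ∧ c < z⁻¹ := by
    rintro z ⟨hz1, hz2⟩
    have hz0 : 0 < z := lt_trans (by positivity) hz1
    have hzc : c < z⁻¹ := by
      rw [hcdef]; exact inv_strictAnti₀ hz0 hz2
    have hzk : z⁻¹ < (k:ℝ) + 1 := by
      have := one_div_lt_one_div_of_lt (by positivity) hz1
      rwa [one_div_one_div, one_div] at this
    exact ⟨gauss_eq k (le_trans hkc hzc.le) hzk, hzc⟩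
  rw [tendsto_nhdsWithin_iff]
  constructor
  · have hcont : Tendsto (fun z : ℝ => z⁻¹ - (k:ℝ)) (𝓝[<] p) (𝓝 (c - k)) :=
      ((continuousAt_inv₀ hp0.ne').sub continuousAt_const).tendsto.mono_left nhdsWithin_le_nhds
    rw [hgp]
    refine hcont.congr' ?_
    filter_upwards [hSmem] with z hz
    exact ((hval z hz).1).symm
  · filter_upwards [hSmem] with z hz
    obtain ⟨he, hlt⟩ := hval z hz
    rw [he, hgp]
    exact sub_lt_sub_right hlt _

/-- The Gauss map is right-continuous at points that are not reciprocals of integers,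
with right limits attained strictly from below. -/
lemma tendsto_gauss_right {p : ℝ} (hp0 : 0 < p) (hp1 : p ≤ 1) (hne : gauss p ≠ 0) :
    Tendsto gauss (𝓝[>] p) (𝓝[<] (gauss p)) := by
  set c : ℝ := p⁻¹ with hcdef
  set k : ℤ := ⌊c⌋ with hkdef
  have hc0 : 0 < c := inv_pos.mpr hp0
  have hkc : (k:ℝ) ≤ c := Int.floor_le c
  have hck : c < (k:ℝ) + 1 := Int.lt_floor_add_one c
  have hgp : gauss p = c - k := gauss_eq k hkc hck
  have hkc' : (k:ℝ) < c := by
    rcases lt_or_eq_of_le hkc with h | h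
    · exact h
    · exfalso; apply hne; rw [hgp, ← h]; ring
  have hc1 : 1 ≤ c := one_le_inv_iff₀.mpr ⟨hp0, hp1⟩
  have hk1 : (1:ℝ) ≤ (k:ℝ) := by
    have : (1:ℤ) ≤ k := by
      by_contra h
      push_neg at h
      have : k ≤ 0 := by omega
      have : (k:ℝ) ≤ 0 := by exact_mod_cast this
      -- then c < k+1 ≤ 1 contradicts 1 ≤ c unless c = ... need c < 1
      have : c < 1 := by linarith
      linarith
    exact_mod_cast this
  have hk0 : (0:ℝ) < (k:ℝ) := by linarith
  have hub : p < 1/(k:ℝ) := by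
    rw [show p = 1/c by rw [one_div, hcdef, inv_inv]]
    exact one_div_lt_one_div_of_lt hk0 hkc'
  have hSmem : Ioo p (1/(k:ℝ)) ∈ 𝓝[>] p := Ioo_mem_nhdsGT hub
  have hval : ∀ z ∈ Ioo p (1/(k:ℝ)), gauss z = z⁻¹ - k ∧ z⁻¹ < c := by
    rintro z ⟨hz1, hz2⟩
    have hz0 : 0 < z := lt_trans hp0 hz1
    have hzc : z⁻¹ < c := by rw [hcdef]; exact inv_strictAnti₀ hp0 hz1
    have hzk : (k:ℝ) ≤ z⁻¹ := by
      have := one_div_lt_one_div_of_lt hz0 hz2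
      rw [one_div_one_div, one_div] at this
      exact this.le
    exact ⟨gauss_eq k hzk (lt_trans hzc hck), hzc⟩
  rw [tendsto_nhdsWithin_iff]
  constructor
  · have hcont : Tendsto (fun z : ℝ => z⁻¹ - (k:ℝ)) (𝓝[>] p) (𝓝 (c - k)) :=
      ((continuousAt_inv₀ hp0.ne').sub continuousAt_const).tendsto.mono_left nhdsWithin_le_nhds
    rw [hgp]
    refine hcont.congr' ?_
    filter_upwards [hSmem] with z hz
    exact ((hval z hz).1).symm
  · filter_upwards [hSmem] with z hz
    obtain ⟨he, hlt⟩ := hval z hz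
    rw [he, hgp]
    exact sub_lt_sub_right hlt _

/-- At reciprocals of integers, the right limit of the Gauss map is `1` (from below). -/
lemma tendsto_gauss_right_zero {p : ℝ} (hp0 : 0 < p) (hp1 : p < 1) (hz : gauss p = 0) :
    Tendsto gauss (𝓝[>] p) (𝓝[<] (1:ℝ)) := by
  set c : ℝ := p⁻¹ with hcdef
  set k : ℤ := ⌊c⌋ with hkdef
  have hc0 : 0 < c := inv_pos.mpr hp0
  have hc1 : 1 < c := (one_lt_inv_iff₀).mpr ⟨hp0, hp1⟩
  have hkc : (k:ℝ) ≤ c := Int.floor_le c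
  have hck : c < (k:ℝ) + 1 := Int.lt_floor_add_one c
  have hgp : gauss p = c - k := gauss_eq k hkc hck
  have hceq : c = (k:ℝ) := by
    have : c - k = 0 := by rw [← hgp]; exact hz
    linarith
  have hk1 : (1:ℝ) < (k:ℝ) := by rw [← hceq]; exact hc1
  have hkm0 : (0:ℝ) < (k:ℝ) - 1 := by linarith
  have hub : p < 1/((k:ℝ)-1) := by
    rw [show p = 1/c by rw [one_div, hcdef, inv_inv]]
    exact one_div_lt_one_div_of_lt hkm0 (by rw [← hceq] at *; linarith)
  have hSmem : Ioo p (1/((k:ℝ)-1)) ∈ 𝓝[>] p := Ioo_mem_nhdsGT hub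
  have hval : ∀ z ∈ Ioo p (1/((k:ℝ)-1)), gauss z = z⁻¹ - (k - 1) ∧ z⁻¹ < c := by
    rintro z ⟨hz1, hz2⟩
    have hz0 : 0 < z := lt_trans hp0 hz1
    have hzc : z⁻¹ < c := by rw [hcdef]; exact inv_strictAnti₀ hp0 hz1
    have hzk : ((k:ℝ) - 1) ≤ z⁻¹ := by
      have := one_div_lt_one_div_of_lt hz0 hz2
      rw [one_div_one_div, one_div] at this
      exact this.le
    refine ⟨?_, hzc⟩
    have := gauss_eq (k - 1) (by push_cast; exact hzk) (by push_cast; rw [hceq] at hzc; linarith)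
    exact_mod_cast this
  rw [tendsto_nhdsWithin_iff]
  constructor
  · have hcont : Tendsto (fun z : ℝ => z⁻¹ - ((k:ℝ) - 1)) (𝓝[>] p) (𝓝 (c - (k - 1))) :=
      ((continuousAt_inv₀ hp0.ne').sub continuousAt_const).tendsto.mono_left nhdsWithin_le_nhds
    have h1 : c - ((k:ℝ) - 1) = 1 := by rw [hceq]; ring
    rw [← h1]
    refine hcont.congr' ?_
    filter_upwards [hSmem] with z hz
    have := (hval z hz).1
    rw [this]
  · filter_upwards [hSmem] with z hz
    obtain ⟨he, hlt⟩ := hval z hz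
    rw [he]
    have h1 : z⁻¹ - ((k:ℝ) - 1) < 1 := by
      have h2 := hlt; rw [hceq] at h2; linarith
    exact h1

lemma gauss_one : gauss 1 = 0 := by simp [gauss]

/-- If `(α, β)` is a connected component of `[0,g] \ E`, then `B t = B β` for all
`t ∈ (α, β]`. -/
theorem B_constant_on_gap (α β : ℝ) (hαβ : α < β) (hα : 0 ≤ α)
    (hβg : β ≤ (Real.sqrt 5 - 1) / 2)
    (hgap : Set.Ioo α β ∩ E = ∅) (hβE : β ∈ E) :
    ∀ t : ℝ, α < t → t ≤ β → B t = B β := by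
  intro t hαt htβ
  have hg1 : (Real.sqrt 5 - 1) / 2 < 1 := by
    nlinarith [Real.sq_sqrt (by norm_num : (0:ℝ) ≤ 5), Real.sqrt_nonneg 5]
  have hβ1 : β < 1 := lt_of_le_of_lt hβg hg1
  have ht0 : 0 < t := lt_of_le_of_lt hα hαt
  apply Subset.antisymm
  · -- hard direction: B t ⊆ B β
    rintro x ⟨hx1, hx2⟩
    refine ⟨hx1, ?_⟩
    by_contra h
    push_neg at h
    obtain ⟨k0, hk0⟩ := h
    set y : ℕ → ℝ := fun k => gauss^[k] x with hydef
    have hyt : ∀ k, t ≤ y k := hx2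
    have hy1 : ∀ k, y k ≤ 1 := by
      intro k
      match k with
      | 0 => exact hx1.2
      | k + 1 =>
        show gauss^[k+1] x ≤ 1
        rw [Function.iterate_succ_apply']
        exact (gauss_lt_one _).le
    set m : ℝ := sInf (Set.range y) with hmdef
    have hbdd : BddBelow (Set.range y) := ⟨t, by rintro _ ⟨k, rfl⟩; exact hyt k⟩
    have hrne : (Set.range y).Nonempty := ⟨y 0, Set.mem_range_self 0⟩
    have hmle : ∀ k, m ≤ y k := fun k => csInf_le hbdd (Set.mem_range_self k)
    have htm : t ≤ m := le_csInf hrne (by rintro _ ⟨k, rfl⟩; exact hyt k)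
    have hmβ : m < β := lt_of_le_of_lt (hmle k0) hk0
    have hm0 : 0 < m := lt_of_lt_of_le ht0 htm
    have hm1 : m ≤ 1 := le_trans (hmle 0) (hy1 0)
    -- it suffices to show m ∈ E
    have hmE : m ∉ E := by
      intro hmE
      have : m ∈ Set.Ioo α β ∩ E := ⟨⟨lt_of_lt_of_le hαt htm, hmβ⟩, hmE⟩
      rw [hgap] at this
      exact this
    exfalso
    apply hmE
    refine ⟨⟨hm0.le, hm1⟩, ?_⟩
    by_cases hatt : ∃ n, y n = m
    · -- infimum attained
      obtain ⟨n, hn⟩ := hatt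
      intro j
      have : gauss^[j] m = y (j + n) := by
        rw [← hn]
        exact (Function.iterate_add_apply gauss j n x).symm
      rw [this]
      exact hmle _
    · -- infimum not attained
      push_neg at hatt
      have hlt : ∀ n, m < y n := fun n => lt_of_le_of_ne (hmle n) (Ne.symm (hatt n))
      have hex : ∀ r : ℕ, ∃ n, y n < m + 1/((r:ℝ)+1) := by
        intro r
        have h' : m < m + 1/((r:ℝ)+1) := by
          have : (0:ℝ) < 1/((r:ℝ)+1) := by positivity
          linarith
        obtain ⟨a, ⟨n, rfl⟩, ha⟩ := exists_lt_of_csInf_lt hrne h'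
        exact ⟨n, ha⟩
      choose nn hnn using hex
      set z : ℕ → ℝ := fun r => y (nn r) with hzdef
      have hz_gt : ∀ r, m < z r := fun r => hlt (nn r)
      have hz_lt : ∀ r, z r < m + 1/((r:ℝ)+1) := hnn
      have hz_tendsto : Tendsto z atTop (𝓝[>] m) := by
        rw [tendsto_nhdsWithin_iff]
        constructor
        · have hup : Tendsto (fun r : ℕ => m + 1/((r:ℝ)+1)) atTop (𝓝 m) := by
            have := tendsto_one_div_add_atTop_nhds_zero_nat (𝕜 := ℝ)
            have h2 := tendsto_const_nhds (x := m) (f := atTop (α := ℕ)) |>.add this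
            simpa using h2
          exact tendsto_of_tendsto_of_tendsto_of_le_of_le tendsto_const_nhds hup
            (fun r => (hz_gt r).le) (fun r => (hz_lt r).le)
        · exact Filter.Eventually.of_forall fun r => hz_gt r
      have horb : ∀ (j r : ℕ), gauss^[j] (z r) = y (j + nn r) := by
        intro j r
        exact (Function.iterate_add_apply gauss j (nn r) x).symm
      -- iterated one-sided limits
      have key : ∀ j : ℕ, Tendsto (fun r => gauss^[j] (z r)) atTop (𝓝[>] (gauss^[j] m)) ∨
          Tendsto (fun r => gauss^[j] (z r)) atTop (𝓝[<] (gauss^[j] m)) := by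
        intro j
        induction j with
        | zero => left; simpa using hz_tendsto
        | succ j ih =>
          have hlim : Tendsto (fun r => gauss^[j] (z r)) atTop (𝓝 (gauss^[j] m)) := by
            rcases ih with h | h
            · exact h.mono_right nhdsWithin_le_nhds
            · exact h.mono_right nhdsWithin_le_nhds
          have hpm : m ≤ gauss^[j] m := by
            refine ge_of_tendsto hlim ?_
            filter_upwards with r
            rw [horb j r]
            exact hmle _
          have hp0 : 0 < gauss^[j] m := lt_of_lt_of_le hm0 hpm
          have hp1 : gauss^[j] m < 1 := by
            match j with
            | 0 => exact lt_trans hmβ hβ1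
            | j + 1 =>
              show gauss^[j+1] m < 1
              rw [Function.iterate_succ_apply']
              exact gauss_lt_one _
          rcases ih with hR | hL
          · by_cases hz0 : gauss (gauss^[j] m) = 0
            · -- bad case: the next two iterates of z r tend to 1⁻ and 0⁺
              exfalso
              have h1 : Tendsto (fun r => gauss^[j+1] (z r)) atTop (𝓝[<] (1:ℝ)) := by
                have := (tendsto_gauss_right_zero hp0 hp1 hz0).comp hR
                simpa [Function.comp_def, Function.iterate_succ_apply'] using this
              have h2 : Tendsto (fun r => gauss^[j+2] (z r)) atTop (𝓝[>] (0:ℝ)) := by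
                have hL1 := tendsto_gauss_left (p := 1) one_pos le_rfl
                rw [gauss_one] at hL1
                have := hL1.comp h1
                simpa [Function.comp_def, Function.iterate_succ_apply'] using this
              have h3 : t ≤ (0:ℝ) := by
                refine ge_of_tendsto (h2.mono_right nhdsWithin_le_nhds) ?_
                filter_upwards with r
                rw [horb (j+2) r]
                exact hyt _
              linarith
            · right
              have := (tendsto_gauss_right hp0 hp1.le hz0).comp hR
              simpa [Function.comp_def, Function.iterate_succ_apply'] using this
          · left
            have := (tendsto_gauss_left hp0 hp1.le).comp hL
            simpa [Function.comp_def, Function.iterate_succ_apply'] using this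
      intro j
      have hlim : Tendsto (fun r => gauss^[j] (z r)) atTop (𝓝 (gauss^[j] m)) := by
        rcases key j with h | h
        · exact h.mono_right nhdsWithin_le_nhds
        · exact h.mono_right nhdsWithin_le_nhds
      refine ge_of_tendsto hlim ?_
      filter_upwards with r
      rw [horb j r]
      exact hmle _
  · -- easy direction: B β ⊆ B t
    rintro x ⟨hx1, hx2⟩
    exact ⟨hx1, fun k => le_trans htβ (hx2 k)⟩
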